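/- Let T > 0 and let u be a classical solution of the potential Camassa–Holm equation on [0,T)×ℝ. If there exist t₀ ∈ (0,T) and real numbers a < b such that u(t₀,x) = 0 and ∂ₜu(t₀,x) = 0 for all x ∈ [a,b], then u(t₀,x) = 0 for all x ∈ ℝ. -/

import Mathlib

open MeasureTheory Set Filter

/-- The inverse Helmholtz operator `Λ⁻² = (1 - ∂ₓ²)⁻¹` on the line, given by
convolution with the kernel `e^{-|x|}/2`. -/
noncomputable def lam2 (w : ℝ → ℝ) (x : ℝ) : ℝ :=
  (1/2) * ∫ y : ℝ, Real.exp (-|x - y|) * w y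

/-- A classical solution of the potential Camassa-Holm equation in nonlocal form
`uₜ - (1/2)uₓ² = Λ⁻²(uₓ² + (1/2)uₓₓ²)` on `[0,T) × ℝ`: for each `t ∈ [0,T)`,
`u(t,·)` is twice continuously differentiable with `∂ₓu(t,·)` and `∂ₓ²u(t,·)`
continuous, bounded and integrable; `u(t,x) → 0` as `|x| → ∞`; `∂ₜu` exists on
`(0,T) × ℝ`; and the equation holds pointwise on `(0,T) × ℝ`. -/
def IsPotentialCHSolution (T : ℝ) (u : ℝ → ℝ → ℝ) : Prop :=
  (∀ t ∈ Set.Ico (0:ℝ) T,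
    ContDiff ℝ 2 (u t) ∧
    (∃ C : ℝ, ∀ x, |deriv (u t) x| ≤ C) ∧ Integrable (deriv (u t)) ∧
    (∃ C : ℝ, ∀ x, |deriv (deriv (u t)) x| ≤ C) ∧ Integrable (deriv (deriv (u t))) ∧
    Tendsto (u t) (cocompact ℝ) (nhds 0)) ∧
  (∀ t ∈ Set.Ioo (0:ℝ) T, ∀ x : ℝ, DifferentiableAt ℝ (fun s => u s x) t) ∧
  (∀ t ∈ Set.Ioo (0:ℝ) T, ∀ x : ℝ,
    deriv (fun s => u s x) t - (1/2) * (deriv (u t) x)^2 =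
      lam2 (fun y => (deriv (u t) y)^2 + (1/2) * (deriv (deriv (u t)) y)^2) x)

/-- **Potential Camassa-Holm equation, slice version (section 3.3).**
If a classical solution of the potential Camassa-Holm equation satisfies
`u(t₀,·) = 0` and `∂ₜu(t₀,·) = 0` on an interval `[a,b]`, then `u(t₀,·) ≡ 0`. -/
theorem potentialCH_vanishing_on_slice (T : ℝ) (hT : 0 < T)
    (u : ℝ → ℝ → ℝ) (hu : IsPotentialCHSolution T u)
    (t₀ : ℝ) (ht₀ : t₀ ∈ Set.Ioo (0:ℝ) T) (a b : ℝ) (hab : a < b)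
    (hvu : ∀ x ∈ Set.Icc a b, u t₀ x = 0)
    (hvut : ∀ x ∈ Set.Icc a b, deriv (fun s => u s x) t₀ = 0) :
    ∀ x : ℝ, u t₀ x = 0 := by
  obtain ⟨hreg, hdiff, heq⟩ := hu
  obtain ⟨hc2, ⟨C1, hC1⟩, hInt1, ⟨C2, hC2⟩, hInt2, hlim⟩ :=
    hreg t₀ ⟨ht₀.1.le, ht₀.2⟩
  set f := deriv (u t₀) with hf
  set g := deriv (deriv (u t₀)) with hg
  set w : ℝ → ℝ := fun y => f y ^ 2 + (1/2) * g y ^ 2 with hw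
  set x₀ : ℝ := (a + b) / 2 with hx₀def
  have hx₀ : x₀ ∈ Set.Ioo a b := ⟨by simp [hx₀def]; linarith, by simp [hx₀def]; linarith⟩
  have hnhds : Set.Icc a b ∈ nhds x₀ := Icc_mem_nhds hx₀.1 hx₀.2
  have hev : u t₀ =ᶠ[nhds x₀] (fun _ => (0:ℝ)) :=
    Filter.eventually_of_mem hnhds hvu
  have hf0 : f =ᶠ[nhds x₀] (fun _ => (0:ℝ)) := by
    have := hev.deriv
    simpa [hf] using this
  have hg0 : g =ᶠ[nhds x₀] (fun _ => (0:ℝ)) := by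
    have := hf0.deriv
    simpa [hg] using this
  -- continuity of f and g
  have hc2' : ContDiff ℝ (1 + 1) (u t₀) := by norm_num; exact hc2
  have hfc1 : ContDiff ℝ 1 f := by
    rw [contDiff_succ_iff_deriv] at hc2'
    exact hc2'.2.2
  have hfc : Continuous f := hfc1.continuous
  have hgc : Continuous g := hfc1.continuous_deriv le_rfl
  have hwc : Continuous w := by continuity
  have hwnn : ∀ y, 0 ≤ w y := fun y => by positivity
  -- integrability of w
  have hC1nn : 0 ≤ C1 := le_trans (abs_nonneg _) (hC1 0)
  have hC2nn : 0 ≤ C2 := le_trans (abs_nonneg _) (hC2 0)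
  have hIntf2 : Integrable (fun y => f y ^ 2) := by
    refine (hInt1.const_mul C1).mono (hfc.pow 2).aestronglyMeasurable ?_
    filter_upwards with y
    have : |f y| * |f y| ≤ C1 * |f y| :=
      mul_le_mul_of_nonneg_right (hC1 y) (abs_nonneg _)
    calc ‖f y ^ 2‖ = |f y| * |f y| := by
          rw [Real.norm_eq_abs, abs_pow, sq]
      _ ≤ C1 * |f y| := this
      _ ≤ ‖C1 * f y‖ := by rw [Real.norm_eq_abs, abs_mul, abs_of_nonneg hC1nn]
  have hIntg2 : Integrable (fun y => g y ^ 2) := by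
    refine (hInt2.const_mul C2).mono (hgc.pow 2).aestronglyMeasurable ?_
    filter_upwards with y
    have : |g y| * |g y| ≤ C2 * |g y| :=
      mul_le_mul_of_nonneg_right (hC2 y) (abs_nonneg _)
    calc ‖g y ^ 2‖ = |g y| * |g y| := by
          rw [Real.norm_eq_abs, abs_pow, sq]
      _ ≤ C2 * |g y| := this
      _ ≤ ‖C2 * g y‖ := by rw [Real.norm_eq_abs, abs_mul, abs_of_nonneg hC2nn]
  have hIntw : Integrable w := hIntf2.add (hIntg2.const_mul _)
  -- the kernel-weighted function
  set k : ℝ → ℝ := fun y => Real.exp (-|x₀ - y|) * w y with hk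
  have hknn : ∀ y, 0 ≤ k y := fun y =>
    mul_nonneg (Real.exp_pos _).le (hwnn y)
  have hkc : Continuous k := by
    apply Continuous.mul _ hwc
    exact Real.continuous_exp.comp (continuous_const.sub continuous_id).abs.neg
  have hIntk : Integrable k := by
    refine hIntw.mono hkc.aestronglyMeasurable ?_
    filter_upwards with y
    rw [Real.norm_eq_abs, Real.norm_eq_abs, abs_of_nonneg (hknn y), abs_of_nonneg (hwnn y)]
    exact mul_le_of_le_one_left (hwnn y) (Real.exp_le_one_iff.2 (neg_nonpos.2 (abs_nonneg _)))
  -- the equation at x₀ gives ∫ k = 0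
  have hx₀Icc : x₀ ∈ Set.Icc a b := Set.mem_Icc_of_Ioo hx₀
  have heq₀ := heq t₀ ht₀ x₀
  rw [hvut x₀ hx₀Icc] at heq₀
  have hfx₀ : f x₀ = 0 := hf0.self_of_nhds
  have hlam : lam2 w x₀ = 0 := by
    rw [← heq₀, ← hf, hfx₀]; ring
  have hIntzero : ∫ y : ℝ, k y = 0 := by
    have : (1/2 : ℝ) * ∫ y : ℝ, k y = 0 := hlam
    linarith
  -- k = 0 a.e., hence everywhere by continuity
  have hkae : k =ᵐ[volume] 0 := by
    rw [← MeasureTheory.integral_eq_zero_iff_of_nonneg hknn hIntk]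
    exact hIntzero
  have hkzero : k = 0 := hkc.ae_eq_iff_eq volume continuous_const |>.mp hkae
  have hwzero : ∀ y, w y = 0 := by
    intro y
    have h1 : k y = 0 := congrFun hkzero y
    have h2 : Real.exp (-|x₀ - y|) ≠ 0 := (Real.exp_pos _).ne'
    have := mul_eq_zero.mp h1
    tauto
  have hfzero : ∀ y, f y = 0 := by
    intro y
    have h := hwzero y
    have h1 : 0 ≤ f y ^ 2 := sq_nonneg _
    have h2 : 0 ≤ (1/2 : ℝ) * g y ^ 2 := by positivity
    have : f y ^ 2 = 0 := by rw [hw] at h; simp only [] at h; nlinarith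
    exact pow_eq_zero_iff two_ne_zero |>.mp this
  -- u t₀ is constant
  have hconst : ∀ x y : ℝ, u t₀ x = u t₀ y := by
    intro x y
    exact is_const_of_deriv_eq_zero (hc2.differentiable two_ne_zero) hfzero x y
  have hc0 : Tendsto (fun _ : ℝ => u t₀ 0) (cocompact ℝ) (nhds 0) := by
    have : u t₀ = fun _ => u t₀ 0 := funext fun x => hconst x 0
    rwa [this] at hlim
  have : u t₀ 0 = 0 :=
    (tendsto_nhds_unique hc0 tendsto_const_nhds).symm
  intro x
  rw [hconst x 0, this]
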